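/- For every q with 1 < q ≤ 2, the function t ↦ h_q(t)² is monotonically increasing on [0,1]. -/
import Mathlib


noncomputable def h (q t : ℝ) : ℝ :=
  (1 - ((1 + Real.sqrt (1 - t)) / 2) ^ q - ((1 - Real.sqrt (1 - t)) / 2) ^ q) ^ (1 / q)

lemma g_mono (q : ℝ) (hq1 : 1 < q) :
    MonotoneOn (fun x : ℝ => x ^ q + (1 - x) ^ q) (Set.Icc (1/2 : ℝ) 1) := by
  have hd : ∀ x : ℝ, HasDerivAt (fun x : ℝ => x ^ q + (1 - x) ^ q)
      (q * x ^ (q - 1) + q * (1 - x) ^ (q - 1) * (0 - 1)) x := by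
    intro x
    have h1 : HasDerivAt (fun x : ℝ => x ^ q) (q * x ^ (q - 1)) x :=
      Real.hasDerivAt_rpow_const (Or.inr hq1.le)
    have hsub : HasDerivAt (fun x : ℝ => 1 - x) (0 - 1) x :=
      (hasDerivAt_const x (1:ℝ)).sub (hasDerivAt_id x)
    have h2 : HasDerivAt (fun x : ℝ => (1 - x) ^ q)
        (q * (1 - x) ^ (q - 1) * (0 - 1)) x :=
      (Real.hasDerivAt_rpow_const (x := 1 - x) (Or.inr hq1.le)).comp x hsub
    exact h1.add h2
  apply monotoneOn_of_deriv_nonneg (convex_Icc _ _)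
  · exact fun x _ => (hd x).differentiableAt.continuousAt.continuousWithinAt
  · exact fun x _ => (hd x).differentiableAt.differentiableWithinAt
  · intro x hx
    rw [interior_Icc] at hx
    rw [(hd x).deriv]
    have h0 : (0:ℝ) ≤ 1 - x := by linarith [hx.2]
    have h1 : 1 - x ≤ x := by linarith [hx.1]
    have hle : (1 - x) ^ (q - 1) ≤ x ^ (q - 1) :=
      Real.rpow_le_rpow h0 h1 (by linarith)
    nlinarith [hle, (by linarith : (0:ℝ) < q)]

theorem h_sq_monotone (q : ℝ) (hq1 : 1 < q) (hq2 : q ≤ 2) :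
    MonotoneOn (fun t => (h q t) ^ 2) (Set.Icc (0:ℝ) 1) := by
  have hq0 : 0 < q := lt_trans one_pos hq1
  set F : ℝ → ℝ := fun t =>
    1 - ((1 + Real.sqrt (1 - t)) / 2) ^ q - ((1 - Real.sqrt (1 - t)) / 2) ^ q with hF
  have hA : ∀ t ∈ Set.Icc (0:ℝ) 1,
      (1 + Real.sqrt (1 - t)) / 2 ∈ Set.Icc (1/2 : ℝ) 1 := by
    intro t ht
    have h0 : 0 ≤ Real.sqrt (1 - t) := Real.sqrt_nonneg _
    have h1 : Real.sqrt (1 - t) ≤ 1 := by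
      exact Real.sqrt_le_one.mpr (by linarith [ht.1])
    constructor <;> [linarith; linarith]
  have hFmono : MonotoneOn F (Set.Icc (0:ℝ) 1) := by
    intro s hs t ht hst
    have hAle : (1 + Real.sqrt (1 - t)) / 2 ≤ (1 + Real.sqrt (1 - s)) / 2 := by
      have := Real.sqrt_le_sqrt (by linarith : 1 - t ≤ 1 - s)
      linarith
    have hg := g_mono q hq1 (hA t ht) (hA s hs) hAle
    have es : (1 - Real.sqrt (1 - s)) / 2 = 1 - (1 + Real.sqrt (1 - s)) / 2 := by ring
    have et : (1 - Real.sqrt (1 - t)) / 2 = 1 - (1 + Real.sqrt (1 - t)) / 2 := by ring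
    simp only [hF]
    rw [es, et]
    simp only at hg
    linarith
  have hF0 : F 0 = 0 := by
    simp only [hF]
    norm_num [Real.sqrt_one, Real.one_rpow, Real.zero_rpow hq0.ne']
  have hFnn : ∀ t ∈ Set.Icc (0:ℝ) 1, 0 ≤ F t := by
    intro t ht
    have := hFmono (Set.mem_Icc.mpr ⟨le_refl 0, zero_le_one⟩) ht ht.1
    linarith [this, hF0.le, hF0.ge]
  intro s hs t ht hst
  have key : ∀ u ∈ Set.Icc (0:ℝ) 1, (h q u) ^ 2 = F u ^ (2 / q) := by
    intro u hu
    show (F u ^ (1 / q)) ^ 2 = F u ^ (2 / q)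
    rw [← Real.rpow_natCast (F u ^ (1 / q)) 2, ← Real.rpow_mul (hFnn u hu)]
    norm_num [div_eq_mul_inv, mul_comm]
  simp only
  rw [key s hs, key t ht]
  exact Real.rpow_le_rpow (hFnn s hs) (hFmono hs ht hst) (by positivity)
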